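/- Let A₁, ..., A_r be finite abelian groups. Then the ascending iterated standard wreath product (···((A₁ ≀ A₂) ≀ A₃) ≀ ···) ≀ A_r is a surjective homomorphic image of the descending iterated standard wreath product A₁ ≀ (A₂ ≀ (··· ≀ A_r)···). -/

import Mathlib

universe u

/-- The automorphism action of `G` on `G → H` by right translation:
`(wrAut H G g) f x = f (x * g)`, so that the semidirect product below has
multiplication `(f₁, g₁)(f₂, g₂) = (f₁ · f₂^{g₁⁻¹}, g₁g₂)` with
`f₂^{g₁⁻¹}(x) = f₂ (x * g₁)`. -/
def wrAut (H G : Type*) [Group H] [Group G] : G →* MulAut (G → H) where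
  toFun g :=
    { toFun := fun f x => f (x * g)
      invFun := fun f x => f (x * g⁻¹)
      left_inv := fun f => funext fun x => by simp [mul_assoc]
      right_inv := fun f => funext fun x => by simp [mul_assoc]
      map_mul' := fun f₁ f₂ => rfl }
  map_one' := MulEquiv.ext fun f => funext fun x => by simp
  map_mul' := fun g₁ g₂ => MulEquiv.ext fun f => funext fun x => by simp [mul_assoc]

/-- The standard (regular) wreath product `H ≀ G`. -/
abbrev Wr (H G : Type*) [Group H] [Group G] := SemidirectProduct (G → H) G (wrAut H G)

/-- The standard wreath product of bundled groups. -/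
def WrGrp (H G : GrpCat.{u}) : GrpCat.{u} := GrpCat.of (Wr H G)

/-- Descending iterated standard wreath product `C₁ ≀ (C₂ ≀ (⋯ ≀ C_r)⋯)`,
given by a head group and the list of remaining groups. -/
def descW : GrpCat.{u} → List GrpCat.{u} → GrpCat.{u}
  | G, [] => G
  | G, H :: t => WrGrp G (descW H t)

/-- Ascending iterated standard wreath product `(⋯(C₁ ≀ C₂) ≀ ⋯) ≀ C_r`,
given by a head group and the list of remaining groups. -/
def ascW : GrpCat.{u} → List GrpCat.{u} → GrpCat.{u}
  | G, [] => G
  | G, H :: t => ascW (WrGrp G H) t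

open Function

namespace Stmt7Aux

instance {N G : Type*} [Group N] [Group G] {φ : G →* MulAut N} [Finite N] [Finite G] :
    Finite (N ⋊[φ] G) :=
  Finite.of_surjective (fun p : N × G => ⟨p.1, p.2⟩) fun x => ⟨(x.left, x.right), rfl⟩

theorem sdp_map_surjective {N G N₁ G₁ : Type*} [Group N] [Group G] [Group N₁] [Group G₁]
    {φ : G →* MulAut N} {φ₁ : G₁ →* MulAut N₁}
    (f₁ : N →* N₁) (f₂ : G →* G₁) (h) (h₁ : Surjective f₁) (h₂ : Surjective f₂) :
    Surjective (SemidirectProduct.map (φ₁ := φ) (φ₂ := φ₁) f₁ f₂ h) := by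
  rintro ⟨n, g⟩
  obtain ⟨n', rfl⟩ := h₁ n
  obtain ⟨g', rfl⟩ := h₂ g
  exact ⟨⟨n', g'⟩, rfl⟩

section LeftFunctor

variable {A K' G : Type*} [Group A] [Group K'] [Group G]

def wrMapLeft (τ : A →* K') : Wr A G →* Wr K' G :=
  SemidirectProduct.map (τ.compLeft G) (MonoidHom.id G) (fun _ => MonoidHom.ext fun _ => rfl)

theorem wrMapLeft_surjective (τ : A →* K') (hτ : Surjective τ) :
    Surjective (wrMapLeft (G := G) τ) :=
  sdp_map_surjective _ _ _
    (fun f => ⟨fun x => (hτ (f x)).choose, funext fun x => (hτ (f x)).choose_spec⟩)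
    surjective_id

end LeftFunctor

section RightFunctor

variable {A G Q : Type*} [CommGroup A] [Group G] [Group Q] [Finite G]

noncomputable def fiberProd (σ : G →* Q) : (G → A) →* (Q → A) where
  toFun f q := ∏ᶠ g : {g : G // σ g = q}, f g
  map_one' := funext fun q => by simp
  map_mul' f₁ f₂ := funext fun q => finprod_mul_distrib (Set.toFinite _) (Set.toFinite _)

def transEquiv (σ : G →* Q) (w : G) (q : Q) :
    {g : G // σ g = q} ≃ {g : G // σ g = q * σ w} where
  toFun g := ⟨g.1 * w, by simp [g.2]⟩
  invFun g := ⟨g.1 * w⁻¹, by simp [g.2, mul_assoc]⟩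
  left_inv g := Subtype.ext (by simp)
  right_inv g := Subtype.ext (by simp)

theorem fiberProd_equivariant (σ : G →* Q) (w : G) :
    (fiberProd (A := A) σ).comp (wrAut A G w).toMonoidHom
      = (wrAut A Q (σ w)).toMonoidHom.comp (fiberProd σ) := by
  refine MonoidHom.ext fun f => funext fun q => ?_
  show ∏ᶠ g : {g : G // σ g = q}, f (g.1 * w) = ∏ᶠ g : {g : G // σ g = q * σ w}, f g.1
  exact finprod_comp_equiv (transEquiv σ w q) (f := fun g => f g.1)

theorem fiberProd_surjective (σ : G →* Q) (hσ : Surjective σ) :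
    Surjective (fiberProd (A := A) σ) := by
  classical
  intro h
  choose s hs using hσ
  refine ⟨fun g => if g = s (σ g) then h (σ g) else 1, funext fun q => ?_⟩
  show ∏ᶠ g : {g : G // σ g = q}, _ = h q
  rw [finprod_eq_single _ (⟨s q, hs q⟩ : {g : G // σ g = q})]
  · simp [hs q]
  · rintro ⟨g, rfl⟩ hg
    simp only
    rw [if_neg]
    exact fun hgs => hg (Subtype.ext hgs)

noncomputable def wrMapRight (σ : G →* Q) : Wr A G →* Wr A Q :=
  SemidirectProduct.map (fiberProd σ) σ (fiberProd_equivariant σ)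

theorem wrMapRight_surjective (σ : G →* Q) (hσ : Surjective σ) :
    Surjective (wrMapRight (A := A) σ) :=
  sdp_map_surjective _ _ _ (fiberProd_surjective σ hσ) hσ

end RightFunctor

section Core

variable {A B C : Type*} [CommGroup A] [Group B] [Group C] [Finite B] [Finite C]

def shiftEquiv (b₁ : C → B) (x : C) (y : B) :
    {b : C → B // b 1 = y} ≃ {b : C → B // b 1 = y * b₁ x} where
  toFun b := ⟨fun z => b.1 z * b₁ (z * x), by simp [b.2]⟩
  invFun b := ⟨fun z => b.1 z * (b₁ (z * x))⁻¹, by simp [b.2]⟩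
  left_inv b := Subtype.ext (funext fun z => by simp)
  right_inv b := Subtype.ext (funext fun z => by simp)

/-- The core surjection `A ≀ (B ≀ C) → (A ≀ B) ≀ C`. -/
noncomputable def coreHom : Wr A (Wr B C) →* Wr (Wr A B) C where
  toFun p :=
    ⟨fun x => ⟨fun y => ∏ᶠ b : {b : C → B // b 1 = y}, p.left ⟨b.1, x⟩, p.right.left x⟩,
      p.right.right⟩
  map_one' := by
    ext x y
    · show (∏ᶠ b : {b : C → B // b 1 = y}, (1 : Wr B C → A) _) = 1
      simp
    · rfl
    · rfl
  map_mul' p q := by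
    ext x y
    · show (∏ᶠ b : {b : C → B // b 1 = y}, (p * q).left ⟨b.1, x⟩)
        = (∏ᶠ b : {b : C → B // b 1 = y}, p.left ⟨b.1, x⟩)
          * ∏ᶠ b : {b : C → B // b 1 = y * p.right.left x},
              q.left ⟨b.1, x * p.right.right⟩
      have h1 : ∀ b : {b : C → B // b 1 = y}, (p * q).left ⟨b.1, x⟩
          = p.left ⟨b.1, x⟩ * q.left (⟨b.1, x⟩ * p.right) := fun b => rfl
      simp only [h1]
      rw [finprod_mul_distrib (Set.toFinite _) (Set.toFinite _)]
      congr 1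
      exact finprod_comp_equiv (shiftEquiv p.right.left x y)
        (f := fun b => q.left ⟨b.1, x * p.right.right⟩)
    · rfl
    · rfl

theorem coreHom_surjective : Surjective (coreHom (A := A) (B := B) (C := C)) := by
  classical
  rintro ⟨F, c⟩
  refine ⟨⟨fun w => if w.left = fun _ => w.left 1 then (F w.right).left (w.left 1) else 1,
    ⟨fun x => (F x).right, c⟩⟩, ?_⟩
  ext x y
  · show (∏ᶠ b : {b : C → B // b 1 = y},
        (if (b.1 : C → B) = fun _ => b.1 1 then (F x).left (b.1 1) else 1)) = (F x).left y
    rw [finprod_eq_single _ (⟨fun _ => y, rfl⟩ : {b : C → B // b 1 = y})]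
    · simp
    · rintro ⟨b, rfl⟩ hb
      simp only
      rw [if_neg]
      exact fun hcb => hb (Subtype.ext hcb)
  · rfl
  · rfl

end Core

section Induction

theorem finite_descW (t : List GrpCat.{u}) : ∀ H : GrpCat.{u}, Finite ↥H →
    (∀ K ∈ t, Finite ↥K) → Finite ↥(descW H t) := by
  induction t with
  | nil => intro H hH _; exact hH
  | cons C t ih =>
    intro H hH hT
    haveI : Finite ↥(descW C t) := ih C (hT C (List.mem_cons_self ..))
      (fun K hK => hT K (List.mem_cons_of_mem _ hK))
    haveI : Finite ↥H := hH
    exact inferInstanceAs (Finite (Wr ↥H ↥(descW C t)))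

theorem ascW_functor (t : List GrpCat.{u}) : ∀ (K K' : GrpCat.{u}) (τ : ↥K →* ↥K'),
    Surjective τ → ∃ ρ : ↥(ascW K t) →* ↥(ascW K' t), Surjective ρ := by
  induction t with
  | nil => intro K K' τ hτ; exact ⟨τ, hτ⟩
  | cons C t ih =>
    intro K K' τ hτ
    exact ih (WrGrp K C) (WrGrp K' C) (wrMapLeft τ) (wrMapLeft_surjective τ hτ)

theorem asc_push (t : List GrpCat.{u}) : ∀ (A H : GrpCat.{u}),
    (∀ x y : ↥A, x * y = y * x) → Finite ↥H → (∀ K ∈ t, Finite ↥K) →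
    ∃ π : Wr ↥A ↥(ascW H t) →* ↥(ascW (WrGrp A H) t), Surjective π := by
  induction t with
  | nil => intro A H _ _ _; exact ⟨MonoidHom.id _, surjective_id⟩
  | cons C t ih =>
    intro A H hA hH hT
    letI : CommGroup ↥A := { (inferInstance : Group ↥A) with mul_comm := hA }
    haveI : Finite ↥H := hH
    haveI : Finite ↥C := hT C (List.mem_cons_self ..)
    haveI hWHC : Finite ↥(WrGrp H C) := inferInstanceAs (Finite (Wr ↥H ↥C))
    obtain ⟨π₁, hπ₁⟩ := ih A (WrGrp H C) hA hWHC (fun K hK => hT K (List.mem_cons_of_mem _ hK))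
    obtain ⟨π₂, hπ₂⟩ := ascW_functor t (WrGrp A (WrGrp H C)) (WrGrp (WrGrp A H) C)
      (coreHom (A := ↥A) (B := ↥H) (C := ↥C)) coreHom_surjective
    exact ⟨π₂.comp π₁, hπ₂.comp hπ₁⟩

end Induction

end Stmt7Aux

open Stmt7Aux in
/-- For finite abelian groups `A₁, …, A_r` (given as the head `A₁`
together with the list `[A₂, …, A_r]`), the ascending iterated wreath product
`(⋯(A₁ ≀ A₂) ≀ ⋯) ≀ A_r` is a surjective homomorphic image of the descending one
`A₁ ≀ (A₂ ≀ (⋯ ≀ A_r)⋯)`. -/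
theorem stmt7 (A₁ : GrpCat.{u}) (l : List GrpCat.{u})
    (h : ∀ H ∈ A₁ :: l, Finite H ∧ ∀ x y : H, x * y = y * x) :
    ∃ π : descW A₁ l →* ascW A₁ l, Function.Surjective π := by
  induction l generalizing A₁ with
  | nil => exact ⟨MonoidHom.id _, surjective_id⟩
  | cons H t ih =>
    obtain ⟨σ, hσ⟩ := ih H (fun K hK => h K (List.mem_cons_of_mem _ hK))
    have hA := (h A₁ (List.mem_cons_self ..)).2
    letI : CommGroup ↥A₁ := { (inferInstance : Group ↥A₁) with mul_comm := hA }
    haveI : Finite ↥(descW H t) := finite_descW t H (h H (by simp)).1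
      (fun K hK => (h K (by simp [hK])).1)
    obtain ⟨π₂, hπ₂⟩ := asc_push t A₁ H hA (h H (by simp)).1 (fun K hK => (h K (by simp [hK])).1)
    exact ⟨π₂.comp (wrMapRight (A := ↥A₁) σ), hπ₂.comp (wrMapRight_surjective σ hσ)⟩
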